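/- Let 0 < β ≤ α ≤ 1/15 and n ≥ 1/α². Let G be a 6α-well-coloured properly edge-coloured n-vertex graph with minimum degree at least 3βn, and let A ⊆ V(G) with |A| ≤ βn and δ(G − A) ≥ (1−α)n. Then G contains a rainbow spanning tree of maximum degree at most (1−α)n in which every vertex of A is a leaf. -/

import Mathlib

open scoped Classical

/-- A colouring of edges is proper if edges sharing a vertex get distinct colours. -/
def ProperColoring {V : Type*} (G : SimpleGraph V) (c : Sym2 V → ℕ) : Prop :=
  ∀ ⦃a b b' : V⦄, G.Adj a b → G.Adj a b' → b ≠ b' → c s(a, b) ≠ c s(a, b')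

/-- A set of edges is rainbow if its edges have pairwise distinct colours. -/
def IsRainbow {V : Type*} (c : Sym2 V → ℕ) (E : Set (Sym2 V)) : Prop :=
  Set.InjOn c E

/-- A finite set of edges forms a matching: non-loops, pairwise vertex-disjoint. -/
def IsMatchingSet {V : Type*} (M : Finset (Sym2 V)) : Prop :=
  (∀ e ∈ M, ¬ e.IsDiag) ∧
  ∀ e ∈ M, ∀ f ∈ M, e ≠ f → ∀ v : V, v ∈ e → v ∉ f

/-- A class `U` of colours is `α`-rich in `G`: the edges of `G` with colour in `U`
contain a matching of size at least `α * |V|`. -/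
def RichClass {V : Type*} [Fintype V] (G : SimpleGraph V) (c : Sym2 V → ℕ)
    (α : ℝ) (U : Set ℕ) : Prop :=
  ∃ M : Finset (Sym2 V), ↑M ⊆ G.edgeSet ∧ (∀ e ∈ M, c e ∈ U) ∧
    IsMatchingSet M ∧ α * (Fintype.card V : ℝ) ≤ (M.card : ℝ)

/-- `G` is `α`-well-coloured: its colours can be partitioned into `|V| - 1`
pairwise disjoint `α`-rich classes. -/
def WellColoured {V : Type*} [Fintype V] (G : SimpleGraph V) (c : Sym2 V → ℕ)
    (α : ℝ) : Prop :=
  ∃ U : Fin (Fintype.card V - 1) → Set ℕ,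
    (∀ i j, i ≠ j → Disjoint (U i) (U j)) ∧
    (∀ i, RichClass G c α (U i)) ∧
    (∀ e ∈ G.edgeSet, ∃ i, c e ∈ U i)

/-- A rainbow forest in `G`. -/
def RainbowForest {V : Type*} (G : SimpleGraph V) (c : Sym2 V → ℕ)
    (F : SimpleGraph V) : Prop :=
  F ≤ G ∧ F.IsAcyclic ∧ IsRainbow c F.edgeSet

/-- `G` is `(α, t)`-robustly-coloured: after removing the edges of any `t`
rainbow forests, `G` remains `α`-well-coloured. -/
def RobustlyColoured {V : Type*} [Fintype V] (G : SimpleGraph V) (c : Sym2 V → ℕ)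
    (α : ℝ) (t : ℕ) : Prop :=
  ∀ F : Fin t → SimpleGraph V, (∀ i, RainbowForest G c (F i)) →
    WellColoured (G.deleteEdges (⋃ i, (F i).edgeSet)) c α


set_option linter.unusedSectionVars false
set_option maxHeartbeats 1000000

namespace Stmt6

variable {V : Type*} [Fintype V] [DecidableEq V]

/-- graph spanned by a finset of edges -/
noncomputable def Gr (S : Finset (Sym2 V)) : SimpleGraph V :=
  SimpleGraph.fromEdgeSet (S : Set (Sym2 V))

lemma gr_adj {S : Finset (Sym2 V)} {a b : V} : (Gr S).Adj a b ↔ s(a, b) ∈ S ∧ a ≠ b := by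
  simp [Gr, SimpleGraph.fromEdgeSet_adj]

noncomputable def cmk (S : Finset (Sym2 V)) : V → (Gr S).ConnectedComponent :=
  (Gr S).connectedComponentMk

lemma cmk_eq_iff {S : Finset (Sym2 V)} {u v : V} :
    cmk S u = cmk S v ↔ (Gr S).Reachable u v :=
  SimpleGraph.ConnectedComponent.eq

/-- the number of connected components of the graph spanned by `S` -/
noncomputable def comps (S : Finset (Sym2 V)) : ℕ :=
  (Finset.univ.image (cmk S)).card

lemma comps_le_card (S : Finset (Sym2 V)) : comps S ≤ Fintype.card V := by
  classical
  calc (Finset.univ.image (cmk S)).card ≤ Finset.univ.card := Finset.card_image_le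
  _ = Fintype.card V := Finset.card_univ

lemma gr_mono {S T : Finset (Sym2 V)} (h : S ⊆ T) : Gr S ≤ Gr T :=
  SimpleGraph.fromEdgeSet_mono (by exact_mod_cast h)

lemma reach_mono {S T : Finset (Sym2 V)} (h : S ⊆ T) {u v : V}
    (hr : (Gr S).Reachable u v) : (Gr T).Reachable u v :=
  hr.mono (gr_mono h)

lemma comps_mono {S T : Finset (Sym2 V)} (h : S ⊆ T) : comps T ≤ comps S := by
  classical
  have hmk : ∀ v : V, cmk T v =
      (cmk S v).map (SimpleGraph.Hom.ofLE (gr_mono h)) := fun v => rfl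
  unfold comps
  have : Finset.univ.image (cmk T) =
      (Finset.univ.image (cmk S)).image
        (SimpleGraph.ConnectedComponent.map (SimpleGraph.Hom.ofLE (gr_mono h))) := by
    rw [Finset.image_image]
    exact Finset.image_congr (fun v _ => hmk v)
  rw [this]
  exact Finset.card_image_le.trans le_rfl

lemma comps_eq_of_iff {S T : Finset (Sym2 V)}
    (h : ∀ u v : V, (Gr S).Reachable u v ↔ (Gr T).Reachable u v) :
    comps S = comps T := by
  classical
  have hwd : ∀ (a b : V), (Gr S).Reachable a b → cmk T a = cmk T b :=
    fun a b hr => cmk_eq_iff.2 ((h a b).1 hr)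
  let φ : (Gr S).ConnectedComponent → (Gr T).ConnectedComponent :=
    Quot.lift (cmk T) hwd
  have hφ : ∀ v : V, φ (cmk S v) = cmk T v := fun v => rfl
  have hinj : Function.Injective φ := by
    intro a b
    induction a using SimpleGraph.ConnectedComponent.ind with | _ u =>
    induction b using SimpleGraph.ConnectedComponent.ind with | _ v =>
    intro hab
    have : cmk T u = cmk T v := hab
    exact cmk_eq_iff.2 ((h u v).2 (cmk_eq_iff.1 this))
  unfold comps
  have himg : Finset.univ.image (cmk T) = (Finset.univ.image (cmk S)).image φ := by
    rw [Finset.image_image]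
    exact (Finset.image_congr (fun v _ => (hφ v).symm))
  rw [himg, Finset.card_image_of_injective _ hinj]

lemma reach_of_adj_reach {G G' : SimpleGraph V}
    (h : ∀ a b : V, G'.Adj a b → G.Reachable a b) {u v : V}
    (hr : G'.Reachable u v) : G.Reachable u v := by
  obtain ⟨w⟩ := hr
  induction w with
  | nil => exact SimpleGraph.Reachable.refl _
  | cons ha _ ih => exact (h _ _ ha).trans ih

lemma gr_insert_adj {S : Finset (Sym2 V)} {e : Sym2 V} {a b : V} :
    (Gr (insert e S)).Adj a b ↔ (s(a, b) = e ∨ s(a, b) ∈ S) ∧ a ≠ b := by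
  simp [gr_adj, Finset.mem_insert]

lemma comps_insert_diag {S : Finset (Sym2 V)} {e : Sym2 V} (h : e.IsDiag) :
    comps (insert e S) = comps S := by
  apply comps_eq_of_iff
  have hG : Gr (insert e S) = Gr S := by
    ext a b
    rw [gr_insert_adj, gr_adj]
    constructor
    · rintro ⟨(rfl | hm), hab⟩
      · exact absurd (Sym2.mk_isDiag_iff.1 h) hab
      · exact ⟨hm, hab⟩
    · rintro ⟨hm, hab⟩; exact ⟨Or.inr hm, hab⟩
  rw [hG]
  exact fun u v => Iff.rfl

lemma reach_insert_cases {S : Finset (Sym2 V)} {x y u v : V}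
    (hr : (Gr (insert s(x, y) S)).Reachable u v) :
    (Gr S).Reachable u v ∨ ((Gr S).Reachable u x ∧ (Gr S).Reachable y v)
      ∨ ((Gr S).Reachable u y ∧ (Gr S).Reachable x v) := by
  obtain ⟨w⟩ := hr
  induction w with
  | nil => exact Or.inl (SimpleGraph.Reachable.refl _)
  | @cons a b _ ha _ ih =>
    rw [gr_insert_adj] at ha
    obtain ⟨he | hm, hab⟩ := ha
    · rw [Sym2.eq_iff] at he
      obtain ⟨rfl, rfl⟩ | ⟨rfl, rfl⟩ := he
      · rcases ih with h1 | ⟨_, h3⟩ | ⟨_, h3⟩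
        · exact Or.inr (Or.inl ⟨SimpleGraph.Reachable.refl _, h1⟩)
        · exact Or.inr (Or.inl ⟨SimpleGraph.Reachable.refl _, h3⟩)
        · exact Or.inl h3
      · rcases ih with h1 | ⟨_, h3⟩ | ⟨_, h3⟩
        · exact Or.inr (Or.inr ⟨SimpleGraph.Reachable.refl _, h1⟩)
        · exact Or.inl h3
        · exact Or.inr (Or.inr ⟨SimpleGraph.Reachable.refl _, h3⟩)
    · have hab' : (Gr S).Reachable a b := SimpleGraph.Adj.reachable (gr_adj.2 ⟨hm, hab⟩)
      rcases ih with h1 | ⟨h2, h3⟩ | ⟨h2, h3⟩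
      · exact Or.inl (hab'.trans h1)
      · exact Or.inr (Or.inl ⟨hab'.trans h2, h3⟩)
      · exact Or.inr (Or.inr ⟨hab'.trans h2, h3⟩)

lemma comps_insert_reach {S : Finset (Sym2 V)} {x y : V} (h : (Gr S).Reachable x y) :
    comps (insert s(x, y) S) = comps S := by
  symm
  apply comps_eq_of_iff
  intro u v
  constructor
  · exact reach_mono (Finset.subset_insert _ _)
  · intro hr
    rcases reach_insert_cases hr with h1 | ⟨h2, h3⟩ | ⟨h2, h3⟩
    · exact h1
    · exact (h2.trans h).trans h3
    · exact (h2.trans h.symm).trans h3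

lemma comps_insert_cross {S : Finset (Sym2 V)} {x y : V} (hxy : x ≠ y)
    (h : ¬ (Gr S).Reachable x y) :
    comps (insert s(x, y) S) + 1 = comps S := by
  classical
  have hsub : S ⊆ insert s(x, y) S := Finset.subset_insert _ _
  set φ : (Gr S).ConnectedComponent → (Gr (insert s(x, y) S)).ConnectedComponent :=
    SimpleGraph.ConnectedComponent.map (SimpleGraph.Hom.ofLE (gr_mono hsub))
    with hφdef
  have hφmk : ∀ v : V, φ (cmk S v) = cmk (insert s(x, y) S) v := fun v => rfl
  have hadj : (Gr (insert s(x, y) S)).Adj x y := gr_insert_adj.2 ⟨Or.inl rfl, hxy⟩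
  have hx2y : cmk (insert s(x, y) S) x = cmk (insert s(x, y) S) y :=
    cmk_eq_iff.2 hadj.reachable
  have hxyne : cmk S x ≠ cmk S y := fun hc => h (cmk_eq_iff.1 hc)
  have himg : Finset.univ.image (cmk (insert s(x, y) S)) =
      ((Finset.univ.image (cmk S)).erase (cmk S y)).image φ := by
    apply Finset.Subset.antisymm
    · intro b hb
      obtain ⟨v, -, rfl⟩ := Finset.mem_image.1 hb
      by_cases hv : cmk S v = cmk S y
      · refine Finset.mem_image.2 ⟨cmk S x, ?_, ?_⟩
        · exact Finset.mem_erase.2 ⟨hxyne, Finset.mem_image_of_mem _ (Finset.mem_univ x)⟩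
        · rw [hφmk, hx2y]
          exact (cmk_eq_iff.2 (reach_mono hsub (cmk_eq_iff.1 hv))).symm
      · exact Finset.mem_image.2 ⟨cmk S v,
          Finset.mem_erase.2 ⟨hv, Finset.mem_image_of_mem _ (Finset.mem_univ v)⟩, hφmk v⟩
    · intro b hb
      obtain ⟨a, ha, rfl⟩ := Finset.mem_image.1 hb
      obtain ⟨v, -, rfl⟩ := Finset.mem_image.1 (Finset.mem_of_mem_erase ha)
      rw [hφmk]
      exact Finset.mem_image_of_mem _ (Finset.mem_univ v)
  have hinj : Set.InjOn φ ((Finset.univ.image (cmk S)).erase (cmk S y)) := by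
    intro a ha b hb hab
    obtain ⟨u, -, rfl⟩ := Finset.mem_image.1 (Finset.mem_of_mem_erase (Finset.mem_coe.1 ha))
    obtain ⟨v, -, rfl⟩ := Finset.mem_image.1 (Finset.mem_of_mem_erase (Finset.mem_coe.1 hb))
    have hr : (Gr (insert s(x, y) S)).Reachable u v := by
      apply cmk_eq_iff.1
      rw [← hφmk, ← hφmk]; exact hab
    rcases reach_insert_cases hr with h1 | ⟨h2, h3⟩ | ⟨h2, h3⟩
    · exact cmk_eq_iff.2 h1
    · exact absurd (cmk_eq_iff.2 h3.symm)
        (Finset.ne_of_mem_erase (Finset.mem_coe.1 hb))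
    · exact absurd (cmk_eq_iff.2 h2) (Finset.ne_of_mem_erase (Finset.mem_coe.1 ha))
  have hy : cmk S y ∈ Finset.univ.image (cmk S) :=
    Finset.mem_image_of_mem _ (Finset.mem_univ y)
  have hpos : 0 < (Finset.univ.image (cmk S)).card := Finset.card_pos.2 ⟨_, hy⟩
  unfold comps
  rw [himg, Finset.card_image_of_injOn hinj, Finset.card_erase_of_mem hy]
  omega

lemma comps_insert_le {S : Finset (Sym2 V)} {e : Sym2 V} :
    comps (insert e S) ≤ comps S :=
  comps_mono (Finset.subset_insert _ _)

lemma comps_le_insert {S : Finset (Sym2 V)} {e : Sym2 V} :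
    comps S ≤ comps (insert e S) + 1 := by
  induction e using Sym2.ind with | _ x y =>
  by_cases hxy : x = y
  · rw [comps_insert_diag (by simp [hxy])]
    omega
  · by_cases hr : (Gr S).Reachable x y
    · rw [comps_insert_reach hr]; omega
    · rw [comps_insert_cross hxy hr]


lemma comps_empty : comps (∅ : Finset (Sym2 V)) = Fintype.card V := by
  classical
  unfold comps
  rw [Finset.card_image_of_injective]
  · exact Finset.card_univ
  · intro a b hab
    have : (Gr (∅ : Finset (Sym2 V))).Reachable a b := cmk_eq_iff.1 hab
    have hbot : Gr (∅ : Finset (Sym2 V)) = ⊥ := by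
      simp [Gr, SimpleGraph.fromEdgeSet_empty]
    rw [hbot] at this
    exact (SimpleGraph.reachable_bot.1 this)

lemma card_add_comps_ge (S : Finset (Sym2 V)) :
    Fintype.card V ≤ comps S + S.card := by
  induction S using Finset.induction with
  | empty => rw [comps_empty]; simp
  | @insert e S he ih =>
    have h1 : comps S ≤ comps (insert e S) + 1 := comps_le_insert
    rw [Finset.card_insert_of_notMem he]
    omega

/-- forests, i.e. acyclic edge sets -/
def IsForest (S : Finset (Sym2 V)) : Prop := comps S + S.card = Fintype.card V

lemma isForest_empty : IsForest (∅ : Finset (Sym2 V)) := by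
  unfold IsForest
  rw [comps_empty]; simp

lemma comps_union_le (S T : Finset (Sym2 V)) : comps S ≤ comps (S ∪ T) + T.card := by
  induction T using Finset.induction with
  | empty => simp
  | @insert e T he ih =>
    rw [Finset.union_insert, Finset.card_insert_of_notMem he]
    have h1 : comps (S ∪ T) ≤ comps (insert e (S ∪ T)) + 1 := comps_le_insert
    omega

lemma isForest_subset {S T : Finset (Sym2 V)} (h : IsForest S) (hT : T ⊆ S) :
    IsForest T := by
  have h1 : Fintype.card V ≤ comps T + T.card := card_add_comps_ge T
  have h2 : comps T ≤ comps (T ∪ (S \ T)) + (S \ T).card := comps_union_le T (S \ T)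
  rw [Finset.union_sdiff_of_subset hT] at h2
  have h3 : (S \ T).card = S.card - T.card := Finset.card_sdiff_of_subset hT
  have h4 : T.card ≤ S.card := Finset.card_le_card hT
  unfold IsForest at h ⊢
  omega

lemma isForest_insert {S : Finset (Sym2 V)} {x y : V} (hF : IsForest S) (hxy : x ≠ y)
    (hnr : ¬ (Gr S).Reachable x y) : IsForest (insert s(x, y) S) ∧ s(x, y) ∉ S := by
  have hnm : s(x, y) ∉ S := by
    intro hm
    exact hnr (SimpleGraph.Adj.reachable (gr_adj.2 ⟨hm, hxy⟩))
  constructor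
  · unfold IsForest at hF ⊢
    rw [Finset.card_insert_of_notMem hnm]
    have := comps_insert_cross hxy hnr
    omega
  · exact hnm

lemma comps_union_reach {S T : Finset (Sym2 V)}
    (h : ∀ x y : V, s(x, y) ∈ T → (Gr S).Reachable x y) :
    comps (S ∪ T) = comps S := by
  induction T using Finset.induction with
  | empty => simp
  | @insert e T he ih =>
    rw [Finset.union_insert]
    have hT : ∀ x y : V, s(x, y) ∈ T → (Gr S).Reachable x y :=
      fun x y hm => h x y (Finset.mem_insert_of_mem hm)
    induction e using Sym2.ind with | _ x y =>
    by_cases hxy : x = y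
    · rw [comps_insert_diag (by simp [hxy])]
      exact ih hT
    · have hr : (Gr S).Reachable x y := h x y (Finset.mem_insert_self _ _)
      rw [comps_insert_reach (reach_mono Finset.subset_union_left hr)]
      exact ih hT

lemma exists_spanning_forest (F0 S : Finset (Sym2 V)) (h0 : IsForest F0) (hss : F0 ⊆ S) :
    ∃ F, F0 ⊆ F ∧ F ⊆ S ∧ IsForest F ∧ comps F = comps S := by
  classical
  set 𝒞 := S.powerset.filter (fun F => F0 ⊆ F ∧ IsForest F) with h𝒞
  have hne : 𝒞.Nonempty := ⟨F0, by
    rw [h𝒞, Finset.mem_filter, Finset.mem_powerset]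
    exact ⟨hss, le_refl _, h0⟩⟩
  obtain ⟨F, hFmem, hFmax⟩ := 𝒞.exists_max_image Finset.card hne
  rw [h𝒞, Finset.mem_filter, Finset.mem_powerset] at hFmem
  obtain ⟨hFS, hF0F, hFfor⟩ := hFmem
  refine ⟨F, hF0F, hFS, hFfor, ?_⟩
  have hle : comps S ≤ comps F := comps_mono hFS
  by_contra hne2
  have hlt : comps S < comps F := lt_of_le_of_ne hle (fun hc => hne2 hc.symm)
  have hex : ∃ x y : V, s(x, y) ∈ S ∧ x ≠ y ∧ ¬ (Gr F).Reachable x y := by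
    by_contra hno
    push_neg at hno
    have : ∀ x y : V, s(x, y) ∈ S → (Gr F).Reachable x y := by
      intro x y hm
      by_cases hxy : x = y
      · subst hxy; exact SimpleGraph.Reachable.refl _
      · exact hno x y hm hxy
    have := comps_union_reach this
    rw [Finset.union_eq_right.2 hFS] at this
    omega
  obtain ⟨x, y, hmS, hxy, hnr⟩ := hex
  obtain ⟨hfor', hnm⟩ := isForest_insert hFfor hxy hnr
  have hmem' : insert s(x, y) F ∈ 𝒞 := by
    rw [h𝒞, Finset.mem_filter, Finset.mem_powerset]
    exact ⟨Finset.insert_subset hmS hFS, hF0F.trans (Finset.subset_insert _ _), hfor'⟩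
  have := hFmax _ hmem'
  rw [Finset.card_insert_of_notMem hnm] at this
  omega

lemma forest_card_le {F S : Finset (Sym2 V)} (hF : IsForest F) (hFS : F ⊆ S) :
    F.card + comps S ≤ Fintype.card V := by
  have := comps_mono hFS
  unfold IsForest at hF
  omega

lemma comps_supermod (A B : Finset (Sym2 V)) :
    comps A + comps B ≤ comps (A ∪ B) + comps (A ∩ B) := by
  classical
  obtain ⟨Fi, -, hFisub, hFif, hFic⟩ :=
    exists_spanning_forest ∅ (A ∩ B) isForest_empty (Finset.empty_subset _)
  obtain ⟨Fu, hsub1, hFusub, hFuf, hFuc⟩ :=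
    exists_spanning_forest Fi (A ∪ B) hFif
      (hFisub.trans (Finset.inter_subset_union))
  have h1 : (Fu ∩ A).card + comps A ≤ Fintype.card V :=
    forest_card_le (isForest_subset hFuf Finset.inter_subset_left) Finset.inter_subset_right
  have h2 : (Fu ∩ B).card + comps B ≤ Fintype.card V :=
    forest_card_le (isForest_subset hFuf Finset.inter_subset_left) Finset.inter_subset_right
  have h3 : (Fu ∩ A).card + (Fu ∩ B).card = Fu.card + (Fu ∩ (A ∩ B)).card := by
    have hcui := Finset.card_union_add_card_inter (Fu ∩ A) (Fu ∩ B)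
    have e1 : (Fu ∩ A) ∪ (Fu ∩ B) = Fu := by
      rw [← Finset.inter_union_distrib_left]
      exact Finset.inter_eq_left.2 hFusub
    have e2 : (Fu ∩ A) ∩ (Fu ∩ B) = Fu ∩ (A ∩ B) := by
      ext e; simp only [Finset.mem_inter]; tauto
    rw [e1, e2] at hcui
    omega
  have h4 : Fi ⊆ Fu ∩ (A ∩ B) := Finset.subset_inter hsub1 hFisub
  have h5 : (Fu ∩ (A ∩ B)).card + comps (A ∩ B) ≤ Fintype.card V :=
    forest_card_le (isForest_subset hFuf Finset.inter_subset_left) Finset.inter_subset_right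
  have h6 : comps (A ∩ B) + Fi.card = Fintype.card V := by
    unfold IsForest at hFif; omega
  have h7 : comps (A ∪ B) + Fu.card = Fintype.card V := by
    unfold IsForest at hFuf; omega
  have h8 : Fi.card ≤ (Fu ∩ (A ∩ B)).card := Finset.card_le_card h4
  omega

theorem rado (col : Sym2 V → ℕ) (N : ℕ) (ℰ : Finset (Sym2 V))
    (hcond : ∀ D : Finset ℕ,
      N + comps (ℰ.filter fun e => col e ∉ D) ≤ Fintype.card V + D.card) :
    ∃ F, F ⊆ ℰ ∧ F.card = N ∧ IsForest F ∧ Set.InjOn col (F : Set (Sym2 V)) := by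
  classical
  induction ℰ using Finset.strongInduction with
  | _ ℰ ih => ?_
  by_cases hinj : Set.InjOn col (ℰ : Set (Sym2 V))
  · have h0 := hcond ∅
    rw [Finset.filter_true_of_mem (fun e _ => Finset.notMem_empty (col e))] at h0
    obtain ⟨F1, -, hF1sub, hF1f, hF1c⟩ :=
      exists_spanning_forest ∅ ℰ isForest_empty (Finset.empty_subset _)
    have hNle : N ≤ F1.card := by
      unfold IsForest at hF1f
      simp only [Finset.card_empty, add_zero] at h0
      omega
    obtain ⟨F, hFsub, hFcard⟩ := Finset.exists_subset_card_eq hNle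
    refine ⟨F, hFsub.trans hF1sub, hFcard, isForest_subset hF1f hFsub, ?_⟩
    exact hinj.mono (by exact_mod_cast hFsub.trans hF1sub)
  · have hex : ∃ x ∈ ℰ, ∃ y ∈ ℰ, col x = col y ∧ x ≠ y := by
      by_contra hc
      push_neg at hc
      exact hinj (fun a ha b hb hab =>
        hc a (Finset.mem_coe.1 ha) b (Finset.mem_coe.1 hb) hab)
    obtain ⟨x, hx, y, hy, hcxy, hne⟩ := hex
    by_cases hxcase : ∀ D : Finset ℕ,
        N + comps ((ℰ.erase x).filter fun e => col e ∉ D) ≤ Fintype.card V + D.card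
    · obtain ⟨F, h1, h2, h3, h4⟩ := ih (ℰ.erase x) (Finset.erase_ssubset hx) hxcase
      exact ⟨F, h1.trans (Finset.erase_subset _ _), h2, h3, h4⟩
    · by_cases hycase : ∀ D : Finset ℕ,
          N + comps ((ℰ.erase y).filter fun e => col e ∉ D) ≤ Fintype.card V + D.card
      · obtain ⟨F, h1, h2, h3, h4⟩ := ih (ℰ.erase y) (Finset.erase_ssubset hy) hycase
        exact ⟨F, h1.trans (Finset.erase_subset _ _), h2, h3, h4⟩
      · exfalso
        push_neg at hxcase hycase
        obtain ⟨Dx, hDx⟩ := hxcase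
        obtain ⟨Dy, hDy⟩ := hycase
        -- if col x ∈ Dx, the erase is invisible, contradicting hcond
        have hkey : ∀ (z : Sym2 V) (D : Finset ℕ), z ∈ ℰ → col z ∈ D →
            (ℰ.erase z).filter (fun e => col e ∉ D) = ℰ.filter (fun e => col e ∉ D) := by
          intro z D hz hzD
          ext e
          simp only [Finset.mem_filter, Finset.mem_erase]
          constructor
          · rintro ⟨⟨-, he⟩, hc⟩; exact ⟨he, hc⟩
          · rintro ⟨he, hc⟩
            refine ⟨⟨?_, he⟩, hc⟩
            rintro rfl; exact hc hzD
        have hcx : col x ∉ Dx := by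
          intro hmem
          rw [hkey x Dx hx hmem] at hDx
          exact absurd (hcond Dx) (by omega)
        have hcy' : col y ∉ Dy := by
          intro hmem
          rw [hkey y Dy hy hmem] at hDy
          exact absurd (hcond Dy) (by omega)
        have hcy : col x ∉ Dy := by rw [hcxy]; exact hcy'
        have hcyx : col y ∉ Dx := by rw [← hcxy]; exact hcx
        set A := (ℰ.erase x).filter (fun e => col e ∉ Dx) with hA
        set B := (ℰ.erase y).filter (fun e => col e ∉ Dy) with hB
        have hU : ℰ.filter (fun e => col e ∉ Dx ∩ Dy) ⊆ A ∪ B := by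
          intro e he
          rw [Finset.mem_filter] at he
          obtain ⟨heE, hec⟩ := he
          rw [Finset.mem_inter] at hec
          push_neg at hec
          rw [Finset.mem_union, hA, hB]
          by_cases hdx : col e ∈ Dx
          · -- then col e ∉ Dy, and e ≠ y
            right
            rw [Finset.mem_filter, Finset.mem_erase]
            have hcey : col e ∉ Dy := hec hdx
            refine ⟨⟨?_, heE⟩, hcey⟩
            rintro rfl; exact hcyx hdx
          · by_cases hex' : e = x
            · right
              subst hex'
              rw [Finset.mem_filter, Finset.mem_erase]
              exact ⟨⟨hne, heE⟩, hcy⟩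
            · left
              rw [Finset.mem_filter, Finset.mem_erase]
              exact ⟨⟨hex', heE⟩, hdx⟩
        have hI : ℰ.filter (fun e => col e ∉ insert (col x) (Dx ∪ Dy)) ⊆ A ∩ B := by
          intro e he
          rw [Finset.mem_filter] at he
          obtain ⟨heE, hec⟩ := he
          rw [Finset.mem_insert, Finset.mem_union] at hec
          push_neg at hec
          obtain ⟨hecx, hecDx, hecDy⟩ := hec
          rw [Finset.mem_inter, hA, hB]
          constructor
          · rw [Finset.mem_filter, Finset.mem_erase]
            refine ⟨⟨?_, heE⟩, hecDx⟩
            rintro rfl; exact hecx rfl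
          · rw [Finset.mem_filter, Finset.mem_erase]
            refine ⟨⟨?_, heE⟩, hecDy⟩
            rintro rfl; exact hecx hcxy.symm
        have k1 := hcond (Dx ∩ Dy)
        have k2 := hcond (insert (col x) (Dx ∪ Dy))
        have m1 : comps (A ∪ B) ≤ comps (ℰ.filter fun e => col e ∉ Dx ∩ Dy) :=
          comps_mono hU
        have m2 : comps (A ∩ B) ≤
            comps (ℰ.filter fun e => col e ∉ insert (col x) (Dx ∪ Dy)) :=
          comps_mono hI
        have sup := comps_supermod A B
        have hDcard : (Dx ∩ Dy).card + (Dx ∪ Dy).card = Dx.card + Dy.card :=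
          Finset.card_inter_add_card_union Dx Dy
        have hDins : (insert (col x) (Dx ∪ Dy)).card = (Dx ∪ Dy).card + 1 := by
          rw [Finset.card_insert_of_notMem]
          rw [Finset.mem_union]
          push_neg
          exact ⟨hcx, hcy⟩
        omega

lemma reach_isolated {S : Finset (Sym2 V)} {x : V} (h : ∀ e ∈ S, x ∉ e) {v : V}
    (hr : (Gr S).Reachable x v) : x = v := by
  obtain ⟨w⟩ := hr
  cases w with
  | nil => rfl
  | cons ha p =>
    exfalso
    rw [gr_adj] at ha
    exact h _ ha.1 (Sym2.mem_mk_left _ _)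

lemma isMatchingSet_subset {M M' : Finset (Sym2 V)} (h : IsMatchingSet M) (hs : M' ⊆ M) :
    IsMatchingSet M' :=
  ⟨fun e he => h.1 e (hs he), fun e he f hf hef v hv => h.2 e (hs he) f (hs hf) hef v hv⟩

lemma isForest_matching {M : Finset (Sym2 V)} (hM : IsMatchingSet M) : IsForest M := by
  classical
  induction M using Finset.induction with
  | empty => exact isForest_empty
  | @insert e M he ih =>
    have hM' : IsMatchingSet M := isMatchingSet_subset hM (Finset.subset_insert _ _)
    have hF : IsForest M := ih hM'
    induction e using Sym2.ind with | _ x y =>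
    have hxy : x ≠ y := by
      intro hc
      exact hM.1 _ (Finset.mem_insert_self _ _) (by simp [hc])
    have hiso : ∀ f ∈ M, x ∉ f := by
      intro f hf
      exact hM.2 _ (Finset.mem_insert_self _ _) f (Finset.mem_insert_of_mem hf)
        (by rintro rfl; exact he hf) x (Sym2.mem_mk_left _ _)
    have hnr : ¬ (Gr M).Reachable x y := fun hr => hxy (reach_isolated hiso hr)
    exact (isForest_insert hF hxy hnr).1

lemma forest_no_diag {S : Finset (Sym2 V)} (h : IsForest S) {e : Sym2 V} (he : e ∈ S) :
    ¬ e.IsDiag := by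
  intro hdiag
  have herase : comps (S.erase e) = comps S := by
    conv_rhs => rw [← Finset.insert_erase he]
    exact (comps_insert_diag hdiag).symm
  have h1 : Fintype.card V ≤ comps (S.erase e) + (S.erase e).card := card_add_comps_ge _
  rw [Finset.card_erase_of_mem he, herase] at h1
  unfold IsForest at h
  have : 0 < S.card := Finset.card_pos.2 ⟨e, he⟩
  omega

/-- components bound via minimum degree outside an "isolated" zone `Z` -/
lemma comps_le_degree_bound (S : Finset (Sym2 V)) (Z : Finset V) (δ : ℕ)
    (hZ : ∀ e ∈ S, ∀ v ∈ e, v ∉ Z)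
    (hdeg : ∀ v : V, v ∉ Z → δ ≤ (Finset.univ.filter (fun w => s(v, w) ∈ S ∧ w ≠ v)).card) :
    comps S ≤ Z.card + (Fintype.card V - Z.card) / (δ + 1) := by
  classical
  set P := Finset.univ.image (cmk S) with hP
  set PZ := Z.image (cmk S) with hPZ
  have hPZcard : PZ.card ≤ Z.card := Finset.card_image_le
  have hsplit : comps S ≤ PZ.card + (P \ PZ).card := by
    have : P ⊆ PZ ∪ (P \ PZ) := by
      intro a ha
      rw [Finset.mem_union, Finset.mem_sdiff]
      by_cases h : a ∈ PZ
      · exact Or.inl h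
      · exact Or.inr ⟨ha, h⟩
    calc comps S = P.card := rfl
    _ ≤ (PZ ∪ (P \ PZ)).card := Finset.card_le_card this
    _ ≤ PZ.card + (P \ PZ).card := Finset.card_union_le _ _
  -- each component avoiding Z has ≥ δ+1 vertices, all outside Z
  have hfib : ∀ a ∈ P \ PZ, δ + 1 ≤ ((Finset.univ \ Z).filter (fun v => cmk S v = a)).card := by
    intro a ha
    rw [Finset.mem_sdiff, hP] at ha
    obtain ⟨haP, haZ⟩ := ha
    obtain ⟨v, -, rfl⟩ := Finset.mem_image.1 haP
    have hvZ : v ∉ Z := by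
      intro hvZ
      exact haZ (Finset.mem_image_of_mem _ hvZ)
    have hnbrs : insert v (Finset.univ.filter (fun w => s(v, w) ∈ S ∧ w ≠ v)) ⊆
        (Finset.univ \ Z).filter (fun w => cmk S w = cmk S v) := by
      intro w hw
      rw [Finset.mem_insert] at hw
      rcases hw with rfl | hw
      · rw [Finset.mem_filter, Finset.mem_sdiff]
        exact ⟨⟨Finset.mem_univ _, hvZ⟩, rfl⟩
      · rw [Finset.mem_filter] at hw
        obtain ⟨-, hwS, hwv⟩ := hw
        have hadj : (Gr S).Adj v w := gr_adj.2 ⟨hwS, fun hc => hwv hc.symm⟩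
        rw [Finset.mem_filter, Finset.mem_sdiff]
        refine ⟨⟨Finset.mem_univ _, ?_⟩, (cmk_eq_iff.2 hadj.reachable).symm⟩
        intro hwZ
        exact hZ _ hwS w (Sym2.mem_mk_right _ _) hwZ
    have hcard1 : δ + 1 ≤ (insert v (Finset.univ.filter (fun w => s(v, w) ∈ S ∧ w ≠ v))).card := by
      rw [Finset.card_insert_of_notMem (by simp)]
      have := hdeg v hvZ
      omega
    exact hcard1.trans (Finset.card_le_card hnbrs)
  -- fibers are disjoint subsets of univ \ Z
  have hsum : (P \ PZ).card * (δ + 1) ≤ (Finset.univ \ Z).card := by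
    have hfibsub : ∀ a ∈ P \ PZ, ((Finset.univ \ Z).filter (fun v => cmk S v = a)) ⊆
        Finset.univ \ Z := fun a _ => Finset.filter_subset _ _
    have hcount : (Finset.univ \ Z).card =
        ∑ a ∈ (Finset.univ \ Z).image (cmk S),
          ((Finset.univ \ Z).filter (fun v => cmk S v = a)).card :=
      Finset.card_eq_sum_card_fiberwise (fun v _ => Finset.mem_image_of_mem _ ‹_›)
    have hsubim : P \ PZ ⊆ (Finset.univ \ Z).image (cmk S) := by
      intro a ha
      have h2 := hfib a ha
      have : ((Finset.univ \ Z).filter (fun v => cmk S v = a)).Nonempty := by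
        rw [← Finset.card_pos]; omega
      obtain ⟨v, hv⟩ := this
      rw [Finset.mem_filter] at hv
      exact Finset.mem_image.2 ⟨v, hv.1, hv.2⟩
    calc (P \ PZ).card * (δ + 1) = ∑ _a ∈ P \ PZ, (δ + 1) := by
          rw [Finset.sum_const, smul_eq_mul]
    _ ≤ ∑ a ∈ P \ PZ, ((Finset.univ \ Z).filter (fun v => cmk S v = a)).card :=
          Finset.sum_le_sum hfib
    _ ≤ ∑ a ∈ (Finset.univ \ Z).image (cmk S),
          ((Finset.univ \ Z).filter (fun v => cmk S v = a)).card := by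
          apply Finset.sum_le_sum_of_subset hsubim
    _ = (Finset.univ \ Z).card := hcount.symm
  have hZuniv : (Finset.univ \ Z).card = Fintype.card V - Z.card := by
    rw [Finset.card_sdiff_of_subset (Finset.subset_univ _), Finset.card_univ]
  rw [hZuniv] at hsum
  have hdiv : (P \ PZ).card ≤ (Fintype.card V - Z.card) / (δ + 1) :=
    (Nat.le_div_iff_mul_le (by omega)).2 hsum
  omega

/-- number of matching edges touching a vertex set `Z` is at most `|Z|` -/
lemma matching_filter_card {M : Finset (Sym2 V)} (hM : IsMatchingSet M) (Z : Finset V) :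
    M.card ≤ (M.filter (fun e => ∀ v ∈ e, v ∉ Z)).card + Z.card := by
  classical
  have hsplit : M.card = (M.filter (fun e => ∀ v ∈ e, v ∉ Z)).card +
      (M.filter (fun e => ¬ ∀ v ∈ e, v ∉ Z)).card :=
    (Finset.card_filter_add_card_filter_not _).symm
  have hbad : (M.filter (fun e => ¬ ∀ v ∈ e, v ∉ Z)).card ≤ Z.card := by
    have hchoice : ∀ e ∈ M.filter (fun e => ¬ ∀ v ∈ e, v ∉ Z), ∃ v, v ∈ e ∧ v ∈ Z := by
      intro e he
      rw [Finset.mem_filter] at he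
      push_neg at he
      obtain ⟨-, v, hv1, hv2⟩ := he
      exact ⟨v, hv1, hv2⟩
    rcases (M.filter (fun e => ¬ ∀ v ∈ e, v ∉ Z)).eq_empty_or_nonempty with hemp | hnon
    · rw [hemp]; simp
    · obtain ⟨e0, he0⟩ := hnon
      obtain ⟨v0, -, -⟩ := hchoice e0 he0
      set f : Sym2 V → V := fun e => if h : ∃ v, v ∈ e ∧ v ∈ Z then h.choose else v0 with hf
      apply Finset.card_le_card_of_injOn f
      · intro e he
        have h := hchoice e he
        rw [hf]; simp only [dif_pos h]
        exact h.choose_spec.2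
      · intro e he e' he' heq
        have h := hchoice e (Finset.mem_coe.1 he)
        have h' := hchoice e' (Finset.mem_coe.1 he')
        rw [hf] at heq
        simp only [dif_pos h, dif_pos h'] at heq
        by_contra hne
        have hv_e : h.choose ∈ e := h.choose_spec.1
        have hv_e' : h.choose ∈ e' := by rw [heq]; exact h'.choose_spec.1
        have hmem : e ∈ M := Finset.mem_of_mem_filter _ (Finset.mem_coe.1 he)
        have hmem' : e' ∈ M := Finset.mem_of_mem_filter _ (Finset.mem_coe.1 he')
        exact hM.2 e hmem e' hmem' hne h.choose hv_e hv_e'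
  omega

lemma filter_colour_card {X : Finset V} {g : V → ℕ} (hinj : Set.InjOn g X) (T : Finset ℕ) :
    (X.filter (fun w => g w ∈ T)).card ≤ T.card := by
  classical
  apply Finset.card_le_card_of_injOn g
  · intro w hw
    exact (Finset.mem_filter.1 hw).2
  · exact hinj.mono (by
      intro w hw
      exact Finset.mem_coe.2 (Finset.mem_of_mem_filter _ (Finset.mem_coe.1 hw)))

lemma greedy_pick (cand : V → Finset V) (colF : V → V → ℕ)
    (Vban : Finset V) (Cban : Finset ℕ) (A' : Finset V)
    (hbig : ∀ a ∈ A', Vban.card + Cban.card + 2 * A'.card < (cand a).card + 1)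
    (hinj : ∀ a ∈ A', Set.InjOn (fun w => colF a w) (cand a)) :
    ∃ f : V → V,
      (∀ a ∈ A', f a ∈ cand a ∧ f a ∉ Vban ∧ colF a (f a) ∉ Cban) ∧
      Set.InjOn f (A' : Set V) ∧
      Set.InjOn (fun a => colF a (f a)) (A' : Set V) := by
  classical
  induction A' using Finset.induction with
  | empty =>
    exact ⟨id, fun a ha => absurd ha (Finset.notMem_empty a), by simp, by simp⟩
  | @insert a s ha ih =>
    have hbig' : ∀ x ∈ s, Vban.card + Cban.card + 2 * s.card < (cand x).card + 1 := by
      intro x hx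
      have := hbig x (Finset.mem_insert_of_mem hx)
      have hcard : s.card ≤ (insert a s).card := Finset.card_le_card (Finset.subset_insert _ _)
      omega
    have hinj' : ∀ x ∈ s, Set.InjOn (fun w => colF x w) (cand x) :=
      fun x hx => hinj x (Finset.mem_insert_of_mem hx)
    obtain ⟨f₀, hf₀mem, hf₀inj, hf₀col⟩ := ih hbig' hinj'
    -- pick a good value for a
    set bad := (cand a).filter (fun w => w ∈ Vban ∨ w ∈ s.image f₀ ∨ colF a w ∈ Cban ∨
      colF a w ∈ s.image (fun x => colF x (f₀ x))) with hbad
    have hbadsub : bad ⊆ cand a := by rw [hbad]; exact Finset.filter_subset _ _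
    have hbadcard : bad.card ≤ Vban.card + Cban.card + 2 * s.card := by
      have h1 : bad ⊆ ((cand a).filter (fun w => w ∈ Vban)) ∪
          ((cand a).filter (fun w => w ∈ s.image f₀)) ∪
          ((cand a).filter (fun w => colF a w ∈ Cban)) ∪
          ((cand a).filter (fun w => colF a w ∈ s.image (fun x => colF x (f₀ x)))) := by
        intro w hw
        rw [hbad, Finset.mem_filter] at hw
        obtain ⟨hw1, hw2⟩ := hw
        simp only [Finset.mem_union, Finset.mem_filter]
        tauto
      have c1 : ((cand a).filter (fun w => w ∈ Vban)).card ≤ Vban.card := by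
        apply Finset.card_le_card_of_injOn (fun w => w)
        · intro w hw; exact (Finset.mem_filter.1 hw).2
        · intro w _ w' _ h; exact h
      have c2 : ((cand a).filter (fun w => w ∈ s.image f₀)).card ≤ s.card := by
        calc ((cand a).filter (fun w => w ∈ s.image f₀)).card
            ≤ (s.image f₀).card := by
              apply Finset.card_le_card_of_injOn (fun w => w)
              · intro w hw; exact (Finset.mem_filter.1 hw).2
              · intro w _ w' _ h; exact h
        _ ≤ s.card := Finset.card_image_le
      have c3 : ((cand a).filter (fun w => colF a w ∈ Cban)).card ≤ Cban.card :=
        filter_colour_card (hinj a (Finset.mem_insert_self _ _)) Cban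
      have c4 : ((cand a).filter
          (fun w => colF a w ∈ s.image (fun x => colF x (f₀ x)))).card ≤ s.card := by
        calc ((cand a).filter (fun w => colF a w ∈ s.image (fun x => colF x (f₀ x)))).card
            ≤ (s.image (fun x => colF x (f₀ x))).card :=
              filter_colour_card (hinj a (Finset.mem_insert_self _ _)) _
        _ ≤ s.card := Finset.card_image_le
      have := Finset.card_le_card h1
      have hu1 := Finset.card_union_le (((cand a).filter (fun w => w ∈ Vban)) ∪
          ((cand a).filter (fun w => w ∈ s.image f₀)) ∪
          ((cand a).filter (fun w => colF a w ∈ Cban)))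
          ((cand a).filter (fun w => colF a w ∈ s.image (fun x => colF x (f₀ x))))
      have hu2 := Finset.card_union_le (((cand a).filter (fun w => w ∈ Vban)) ∪
          ((cand a).filter (fun w => w ∈ s.image f₀)))
          ((cand a).filter (fun w => colF a w ∈ Cban))
      have hu3 := Finset.card_union_le ((cand a).filter (fun w => w ∈ Vban))
          ((cand a).filter (fun w => w ∈ s.image f₀))
      omega
    have hgood : ((cand a) \ bad).Nonempty := by
      rw [← Finset.card_pos]
      have hsd : ((cand a) \ bad).card = (cand a).card - bad.card :=
        Finset.card_sdiff_of_subset hbadsub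
      rw [hsd]
      have := hbig a (Finset.mem_insert_self _ _)
      have hcard : (insert a s).card = s.card + 1 := Finset.card_insert_of_notMem ha
      omega
    obtain ⟨w, hw⟩ := hgood
    rw [Finset.mem_sdiff, hbad, Finset.mem_filter] at hw
    obtain ⟨hwc, hwbad⟩ := hw
    push_neg at hwbad
    obtain ⟨hw1, hw2, hw3, hw4⟩ := hwbad hwc
    set f := Function.update f₀ a w with hf
    have hfa : f a = w := Function.update_self a w f₀
    have hfx : ∀ x ∈ s, f x = f₀ x := by
      intro x hx
      have hxa : x ≠ a := by rintro rfl; exact ha hx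
      exact Function.update_of_ne hxa w f₀
    refine ⟨f, ?_, ?_, ?_⟩
    · intro x hx
      rcases Finset.mem_insert.1 hx with rfl | hx
      · rw [hfa]; exact ⟨hwc, hw1, hw3⟩
      · rw [hfx x hx]; exact hf₀mem x hx
    · intro x hx y hy hxy
      rw [Finset.coe_insert, Set.mem_insert_iff] at hx hy
      rcases hx with rfl | hx <;> rcases hy with rfl | hy
      · rfl
      · exfalso
        rw [hfa, hfx y (Finset.mem_coe.1 hy)] at hxy
        refine hw2 ?_
        rw [hxy]
        exact Finset.mem_image_of_mem f₀ (Finset.mem_coe.1 hy)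
      · exfalso
        rw [hfa, hfx x (Finset.mem_coe.1 hx)] at hxy
        refine hw2 ?_
        rw [← hxy]
        exact Finset.mem_image_of_mem f₀ (Finset.mem_coe.1 hx)
      · rw [hfx x (Finset.mem_coe.1 hx), hfx y (Finset.mem_coe.1 hy)] at hxy
        exact hf₀inj hx hy hxy
    · intro x hx y hy hxy
      simp only at hxy
      rw [Finset.coe_insert, Set.mem_insert_iff] at hx hy
      rcases hx with rfl | hx <;> rcases hy with rfl | hy
      · rfl
      · exfalso
        rw [hfa, hfx y (Finset.mem_coe.1 hy)] at hxy
        refine hw4 ?_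
        rw [hxy]
        exact Finset.mem_image_of_mem (fun x => colF x (f₀ x)) (Finset.mem_coe.1 hy)
      · exfalso
        rw [hfa, hfx x (Finset.mem_coe.1 hx)] at hxy
        refine hw4 ?_
        rw [← hxy]
        exact Finset.mem_image_of_mem (fun x => colF x (f₀ x)) (Finset.mem_coe.1 hx)
      · rw [hfx x (Finset.mem_coe.1 hx), hfx y (Finset.mem_coe.1 hy)] at hxy
        exact hf₀col hx hy hxy

end Stmt6

theorem stmt6 {V : Type*} [Fintype V] [DecidableEq V] (G : SimpleGraph V)
    (c : Sym2 V → ℕ) (α β : ℝ) (hβ : 0 < β) (hβα : β ≤ α) (hα : α ≤ 1 / 15)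
    (hn : 1 / α ^ 2 ≤ (Fintype.card V : ℝ))
    (hproper : ProperColoring G c)
    (hwell : WellColoured G c (6 * α))
    (hdeg : ∀ v : V, 3 * β * (Fintype.card V : ℝ) ≤ (G.degree v : ℝ))
    (A : Finset V) (hA : (A.card : ℝ) ≤ β * (Fintype.card V : ℝ))
    (hdegA : ∀ v : V, v ∉ A →
      (1 - α) * (Fintype.card V : ℝ) ≤ ((G.neighborFinset v \ A).card : ℝ)) :
    ∃ T : SimpleGraph V, T ≤ G ∧ T.IsTree ∧ IsRainbow c T.edgeSet ∧
      (∀ v : V, (T.degree v : ℝ) ≤ (1 - α) * (Fintype.card V : ℝ)) ∧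
      (∀ v ∈ A, T.degree v = 1) := by
  classical
  set n : ℕ := Fintype.card V with hndef
  obtain ⟨U, hUdisj, hUrich, hUcover⟩ := hwell
  choose M hMsub hMcol hMmatch hMcard using hUrich
  -- ==================== numeric groundwork ====================
  have hα0 : 0 < α := lt_of_lt_of_le hβ hβα
  have h15α : (15 : ℝ) ≤ 1 / α := by
    rw [le_div_iff₀ hα0]; linarith
  have hn225 : (225 : ℝ) ≤ (n : ℝ) := by
    refine le_trans ?_ hn
    have h2 : (15 : ℝ) ^ 2 ≤ (1 / α) ^ 2 := by
      apply pow_le_pow_left₀ (by norm_num) h15α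
    calc (225 : ℝ) = 15 ^ 2 := by norm_num
    _ ≤ (1 / α) ^ 2 := h2
    _ = 1 / α ^ 2 := by rw [div_pow, one_pow]
  have hαn : 1 / α ≤ α * (n : ℝ) := by
    have h1 : α * (1 / α ^ 2) ≤ α * (n : ℝ) := mul_le_mul_of_nonneg_left hn (le_of_lt hα0)
    have h2 : α * (1 / α ^ 2) = 1 / α := by
      field_simp
    linarith
  have hαn15 : (15 : ℝ) ≤ α * (n : ℝ) := h15α.trans hαn
  have hαnn : α * (n : ℝ) ≤ (n : ℝ) / 15 := by
    have h0 : (0:ℝ) ≤ (n:ℝ) := by positivity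
    calc α * (n:ℝ) ≤ (1/15) * n := mul_le_mul_of_nonneg_right hα h0
    _ = (n:ℝ)/15 := by ring
  set k : ℕ := ⌈α * (n : ℝ)⌉₊ with hkdef
  have hkup : (k : ℝ) ≤ α * (n : ℝ) + 1 :=
    le_of_lt (Nat.ceil_lt_add_one (by positivity))
  have hklow : α * (n : ℝ) ≤ (k : ℝ) := Nat.le_ceil _
  have hk15 : 15 ≤ k := by
    have : (15 : ℝ) ≤ (k : ℝ) := hαn15.trans hklow
    exact_mod_cast this
  have h15k : 15 * k ≤ n + 15 := by
    have : (15 : ℝ) * (k : ℝ) ≤ (n : ℝ) + 15 := by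
      calc (15:ℝ) * k ≤ 15 * (α * n + 1) := by linarith
      _ = 15 * (α * n) + 15 := by ring
      _ ≤ (n:ℝ) + 15 := by
          have := hαnn; linarith
    exact_mod_cast this
  have h14k : 14 * k ≤ n := by omega
  have hkn : k ≤ n := by omega
  have hAk : A.card ≤ k := by
    have h1 : (A.card : ℝ) ≤ (k : ℝ) := by
      calc (A.card : ℝ) ≤ β * n := hA
      _ ≤ α * n := by
          have h0 : (0:ℝ) ≤ (n:ℝ) := by positivity
          exact mul_le_mul_of_nonneg_right hβα h0
      _ ≤ k := hklow
    exact_mod_cast h1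
  set m : ℕ := n - k with hmdef
  have hmk : m + k = n := by omega
  have h13k : 13 * k ≤ m := by omega
  have hm1 : 1 ≤ m := by omega
  -- ==================== phase B : leaf edges for A ====================
  have hbigB : ∀ a ∈ A, (∅ : Finset V).card + (∅ : Finset ℕ).card + 2 * A.card <
      (G.neighborFinset a \ A).card + 1 := by
    intro a haA
    simp only [Finset.card_empty, Nat.zero_add, zero_add]
    have h1 : 2 * A.card ≤ (G.neighborFinset a \ A).card := by
      have hsd : (G.neighborFinset a).card - A.card ≤ (G.neighborFinset a \ A).card :=
        Finset.le_card_sdiff _ _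
      have hdg : (G.neighborFinset a).card = G.degree a :=
        SimpleGraph.card_neighborFinset_eq_degree _ _
      have h3 : 3 * A.card ≤ (G.neighborFinset a).card := by
        have hd := hdeg a
        have hr : (3 * A.card : ℝ) ≤ ((G.neighborFinset a).card : ℝ) := by
          rw [hdg]
          calc (3 * A.card : ℝ) = 3 * (A.card : ℝ) := by push_cast; ring
          _ ≤ 3 * (β * n) := by linarith
          _ = 3 * β * n := by ring
          _ ≤ (G.degree a : ℝ) := hd
        exact_mod_cast hr
      omega
    omega
  have hinjB : ∀ a ∈ A, Set.InjOn (fun w => c s(a, w)) ↑(G.neighborFinset a \ A) := by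
    intro a haA w hw w' hw' hc
    by_contra hne
    have hadj : G.Adj a w := by
      have := (Finset.mem_sdiff.1 (Finset.mem_coe.1 hw)).1
      exact (SimpleGraph.mem_neighborFinset _ _ _).1 this
    have hadj' : G.Adj a w' := by
      have := (Finset.mem_sdiff.1 (Finset.mem_coe.1 hw')).1
      exact (SimpleGraph.mem_neighborFinset _ _ _).1 this
    exact hproper hadj hadj' hne hc
  obtain ⟨f₁, hf₁mem, hf₁inj, hf₁col⟩ :=
    Stmt6.greedy_pick (fun a => G.neighborFinset a \ A) (fun a w => c s(a, w)) ∅ ∅ A hbigB hinjB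
  -- ==================== phase C : enlarge A to A⁺ ====================
  have hAvail : k - A.card ≤ (Finset.univ \ (A ∪ A.image f₁)).card := by
    have h1 : (A ∪ A.image f₁).card ≤ 2 * k := by
      have := Finset.card_union_le A (A.image f₁)
      have h2 : (A.image f₁).card ≤ A.card := Finset.card_image_le
      omega
    have h2 : (Finset.univ \ (A ∪ A.image f₁)).card =
        n - (A ∪ A.image f₁).card := by
      rw [Finset.card_sdiff_of_subset (Finset.subset_univ _), Finset.card_univ]
    omega
  obtain ⟨extra, hextrasub, hextracard⟩ := Finset.exists_subset_card_eq hAvail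
  set Ap := A ∪ extra with hApdef
  have hdisjAE : Disjoint A extra := by
    rw [Finset.disjoint_right]
    intro x hx
    have := hextrasub hx
    rw [Finset.mem_sdiff] at this
    intro hxA
    exact this.2 (Finset.mem_union_left _ hxA)
  have hextraimg : ∀ x ∈ extra, x ∉ A.image f₁ := by
    intro x hx
    have := hextrasub hx
    rw [Finset.mem_sdiff] at this
    intro hxi
    exact this.2 (Finset.mem_union_right _ hxi)
  have hApcard : Ap.card = k := by
    rw [hApdef, Finset.card_union_of_disjoint hdisjAE, hextracard]
    omega
  have hAsub : A ⊆ Ap := Finset.subset_union_left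
  have hextraA : ∀ a ∈ extra, a ∉ A := by
    intro a ha
    exact Finset.disjoint_right.1 hdisjAE ha
  -- neighbourhood bound outside A⁺
  have hNAp : ∀ v : V, v ∉ A → m ≤ (G.neighborFinset v \ Ap).card + k := by
    intro v hv
    have h1 : n - k ≤ (G.neighborFinset v \ A).card := by
      have hr : ((n : ℝ) - k) ≤ ((G.neighborFinset v \ A).card : ℝ) := by
        calc ((n:ℝ) - k) ≤ (n:ℝ) - α * n := by linarith
        _ = (1 - α) * n := by ring
        _ ≤ _ := hdegA v hv
      have hr' : ((n - k : ℕ) : ℝ) ≤ ((G.neighborFinset v \ A).card : ℝ) := by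
        rw [Nat.cast_sub hkn]; exact hr
      exact_mod_cast hr'
    have h2 : G.neighborFinset v \ Ap = (G.neighborFinset v \ A) \ extra := by
      rw [hApdef]
      ext w
      simp only [Finset.mem_sdiff, Finset.mem_union]
      tauto
    have h3 : (G.neighborFinset v \ A).card - extra.card ≤
        ((G.neighborFinset v \ A) \ extra).card := Finset.le_card_sdiff _ _
    have h4 : extra.card ≤ k := by omega
    rw [h2]
    omega
  -- ==================== phase D : leaf edges for extra ====================
  have hbigD : ∀ a ∈ extra, (A.image f₁).card +
      (A.image (fun x => c s(x, f₁ x))).card + 2 * extra.card <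
      (G.neighborFinset a \ Ap).card + 1 := by
    intro a ha
    have h1 := hNAp a (hextraA a ha)
    have h2 : (A.image f₁).card ≤ k := le_trans Finset.card_image_le hAk
    have h3 : (A.image (fun x => c s(x, f₁ x))).card ≤ k :=
      le_trans Finset.card_image_le hAk
    have h4 : extra.card ≤ k := by omega
    omega
  have hinjD : ∀ a ∈ extra, Set.InjOn (fun w => c s(a, w)) ↑(G.neighborFinset a \ Ap) := by
    intro a ha w hw w' hw' hc
    by_contra hne
    have hadj : G.Adj a w := by
      have := (Finset.mem_sdiff.1 (Finset.mem_coe.1 hw)).1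
      exact (SimpleGraph.mem_neighborFinset _ _ _).1 this
    have hadj' : G.Adj a w' := by
      have := (Finset.mem_sdiff.1 (Finset.mem_coe.1 hw')).1
      exact (SimpleGraph.mem_neighborFinset _ _ _).1 this
    exact hproper hadj hadj' hne hc
  obtain ⟨f₂, hf₂mem, hf₂inj, hf₂col⟩ :=
    Stmt6.greedy_pick (fun a => G.neighborFinset a \ Ap) (fun a w => c s(a, w))
      (A.image f₁) (A.image (fun x => c s(x, f₁ x))) extra hbigD hinjD
  -- ==================== the combined pendant map ====================
  set b : V → V := fun v => if v ∈ A then f₁ v else f₂ v with hbdef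
  have hbA : ∀ a ∈ A, b a = f₁ a := by
    intro a ha; rw [hbdef]; simp [ha]
  have hbE : ∀ a ∈ extra, b a = f₂ a := by
    intro a ha; rw [hbdef]; simp [hextraA a ha]
  have hb1 : ∀ a ∈ Ap, G.Adj a (b a) := by
    intro a ha
    rcases Finset.mem_union.1 ha with ha | ha
    · rw [hbA a ha]
      have := (hf₁mem a ha).1
      exact (SimpleGraph.mem_neighborFinset _ _ _).1 (Finset.mem_sdiff.1 this).1
    · rw [hbE a ha]
      have := (hf₂mem a ha).1
      exact (SimpleGraph.mem_neighborFinset _ _ _).1 (Finset.mem_sdiff.1 this).1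
  have hb2 : ∀ a ∈ Ap, b a ∉ Ap := by
    intro a ha
    rcases Finset.mem_union.1 ha with ha | ha
    · rw [hbA a ha]
      rw [hApdef, Finset.mem_union]
      push_neg
      constructor
      · exact (Finset.mem_sdiff.1 (hf₁mem a ha).1).2
      · intro hc
        exact hextraimg _ hc (Finset.mem_image_of_mem f₁ ha)
    · rw [hbE a ha]
      exact (Finset.mem_sdiff.1 (hf₂mem a ha).1).2
  have hb3 : Set.InjOn b ↑Ap := by
    intro x hx y hy hxy
    rcases Finset.mem_union.1 (Finset.mem_coe.1 hx) with hx' | hx' <;>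
      rcases Finset.mem_union.1 (Finset.mem_coe.1 hy) with hy' | hy'
    · rw [hbA x hx', hbA y hy'] at hxy
      exact hf₁inj (Finset.mem_coe.2 hx') (Finset.mem_coe.2 hy') hxy
    · exfalso
      rw [hbA x hx', hbE y hy'] at hxy
      exact (hf₂mem y hy').2.1 (hxy ▸ Finset.mem_image_of_mem f₁ hx')
    · exfalso
      rw [hbE x hx', hbA y hy'] at hxy
      exact (hf₂mem x hx').2.1 (hxy.symm ▸ Finset.mem_image_of_mem f₁ hy')
    · rw [hbE x hx', hbE y hy'] at hxy
      exact hf₂inj (Finset.mem_coe.2 hx') (Finset.mem_coe.2 hy') hxy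
  have hb4 : Set.InjOn (fun a => c s(a, b a)) ↑Ap := by
    intro x hx y hy hxy
    simp only at hxy
    rcases Finset.mem_union.1 (Finset.mem_coe.1 hx) with hx' | hx' <;>
      rcases Finset.mem_union.1 (Finset.mem_coe.1 hy) with hy' | hy'
    · rw [hbA x hx', hbA y hy'] at hxy
      exact hf₁col (Finset.mem_coe.2 hx') (Finset.mem_coe.2 hy') hxy
    · exfalso
      rw [hbA x hx', hbE y hy'] at hxy
      refine (hf₂mem y hy').2.2 ?_
      rw [← hxy]
      exact Finset.mem_image_of_mem _ hx'
    · exfalso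
      rw [hbE x hx', hbA y hy'] at hxy
      refine (hf₂mem x hx').2.2 ?_
      rw [hxy]
      exact Finset.mem_image_of_mem _ hy'
    · rw [hbE x hx', hbE y hy'] at hxy
      exact hf₂col (Finset.mem_coe.2 hx') (Finset.mem_coe.2 hy') hxy
  set C0 : Finset ℕ := Ap.image (fun a => c s(a, b a)) with hC0def
  have hC0card : C0.card = k := by
    rw [hC0def, Finset.card_image_of_injOn hb4, hApcard]
  -- ==================== the edge pool and the Rado condition ====================
  set ℰ : Finset (Sym2 V) :=
    G.edgeFinset.filter (fun e => (∀ v ∈ e, v ∉ Ap) ∧ c e ∉ C0) with hℰdef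
  have hcond : ∀ D : Finset ℕ,
      (m - 1) + Stmt6.comps (ℰ.filter fun e => c e ∉ D) ≤ n + D.card := by
    intro D
    set SD := ℰ.filter (fun e => c e ∉ D) with hSDdef
    have hSDav : ∀ e ∈ SD, ∀ v ∈ e, v ∉ Ap := by
      intro e he v hv
      have h1 := Finset.mem_of_mem_filter _ he
      rw [hℰdef, Finset.mem_filter] at h1
      exact h1.2.1 v hv
    by_cases hd1 : m ≤ D.card + 1
    · have := Stmt6.comps_le_card SD
      rw [← hndef] at this
      omega
    · push_neg at hd1
      by_cases hd2 : D.card + 3 * k + 1 ≤ m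
      · -- min-degree regime
        obtain ⟨q, hq⟩ : ∃ q, m = q + 2 * k + D.card :=
          ⟨m - 2 * k - D.card, by omega⟩
        have hq1 : k + 1 ≤ q := by omega
        have hdegS : ∀ v : V, v ∉ Ap →
            q ≤ (Finset.univ.filter (fun w => s(v, w) ∈ SD ∧ w ≠ v)).card := by
          intro v hv
          have hvA : v ∉ A := fun hc => hv (hAsub hc)
          have hNv := hNAp v hvA
          set X := (G.neighborFinset v \ Ap).filter (fun w => c s(v, w) ∉ C0 ∪ D) with hXdef
          have hXsub : X ⊆ Finset.univ.filter (fun w => s(v, w) ∈ SD ∧ w ≠ v) := by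
            intro w hw
            rw [hXdef, Finset.mem_filter, Finset.mem_sdiff,
              SimpleGraph.mem_neighborFinset] at hw
            obtain ⟨⟨hadj, hwAp⟩, hcol⟩ := hw
            rw [Finset.mem_union] at hcol
            push_neg at hcol
            rw [Finset.mem_filter]
            refine ⟨Finset.mem_univ _, ?_, hadj.ne'⟩
            rw [hSDdef, Finset.mem_filter, hℰdef, Finset.mem_filter]
            refine ⟨⟨SimpleGraph.mem_edgeFinset.2 hadj, ?_, hcol.1⟩, hcol.2⟩
            intro u hu
            rw [Sym2.mem_iff] at hu
            rcases hu with rfl | rfl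
            · exact hv
            · exact hwAp
          have hsplit := Finset.card_filter_add_card_filter_not
            (s := G.neighborFinset v \ Ap) (p := fun w => c s(v, w) ∉ C0 ∪ D)
          have hbadle : ((G.neighborFinset v \ Ap).filter
              (fun w => ¬ c s(v, w) ∉ C0 ∪ D)).card ≤ k + D.card := by
            have heq : ((G.neighborFinset v \ Ap).filter (fun w => ¬ c s(v, w) ∉ C0 ∪ D))
                = ((G.neighborFinset v \ Ap).filter (fun w => c s(v, w) ∈ C0 ∪ D)) := by
              apply Finset.filter_congr
              intro w _
              simp only [not_not]
            rw [heq]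
            have hinjv : Set.InjOn (fun w => c s(v, w)) ↑(G.neighborFinset v \ Ap) := by
              intro w hw w' hw' hc
              by_contra hne
              have hadj : G.Adj v w :=
                (SimpleGraph.mem_neighborFinset _ _ _).1
                  (Finset.mem_sdiff.1 (Finset.mem_coe.1 hw)).1
              have hadj' : G.Adj v w' :=
                (SimpleGraph.mem_neighborFinset _ _ _).1
                  (Finset.mem_sdiff.1 (Finset.mem_coe.1 hw')).1
              exact hproper hadj hadj' hne hc
            calc ((G.neighborFinset v \ Ap).filter (fun w => c s(v, w) ∈ C0 ∪ D)).card
                ≤ (C0 ∪ D).card := Stmt6.filter_colour_card hinjv _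
            _ ≤ C0.card + D.card := Finset.card_union_le _ _
            _ = k + D.card := by rw [hC0card]
          have hXeq : X.card = ((G.neighborFinset v \ Ap).filter
              (fun w => c s(v, w) ∉ C0 ∪ D)).card := by rw [hXdef]
          have hXcard : q ≤ X.card := by omega
          exact hXcard.trans (Finset.card_le_card hXsub)
        have hcb := Stmt6.comps_le_degree_bound SD Ap q hSDav hdegS
        rw [hApcard, ← hndef] at hcb
        have hprod : m < (D.card + 2) * (q + 1) := by
          have hexp : (D.card + 2) * (q + 1) = q * D.card + 2 * q + D.card + 2 := by ring
          have h2k : 2 * k < q * D.card + q + 2 := by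
            rcases Nat.eq_zero_or_pos D.card with hD0 | hDpos
            · have hq0 : m = q + 2 * k := by omega
              have h3 : q * D.card = 0 := by rw [hD0, Nat.mul_zero]
              omega
            · have h4 : q * 1 ≤ q * D.card := Nat.mul_le_mul_left q hDpos
              omega
          omega
        have hdiv : m / (q + 1) < D.card + 2 := (Nat.div_lt_iff_lt_mul (by omega)).2 hprod
        have hnkm : n - k = m := by omega
        rw [hnkm] at hcb
        omega
      · -- rich-class regime
        push_neg at hd2
        set hit := C0 ∪ D with hhitdef
        have hhiteq : hit.card ≤ C0.card + D.card := by
          rw [hhitdef]; exact Finset.card_union_le _ _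
        have hhitcard : hit.card ≤ n - 2 := by omega
        set Bad := Finset.univ.filter
          (fun i : Fin (Fintype.card V - 1) => ∃ x ∈ hit, (x : ℕ) ∈ U i) with hBaddef
        have hBadcard : Bad.card ≤ hit.card := by
          rcases Bad.eq_empty_or_nonempty with hemp | hnon
          · rw [hemp]; simp
          · have hchoice : ∀ i ∈ Bad, ∃ x, x ∈ hit ∧ (x : ℕ) ∈ U i := by
              intro i hi
              rw [hBaddef, Finset.mem_filter] at hi
              obtain ⟨-, x, hx1, hx2⟩ := hi
              exact ⟨x, hx1, hx2⟩
            apply Finset.card_le_card_of_injOn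
              (fun i => if h : ∃ x, x ∈ hit ∧ (x : ℕ) ∈ U i then h.choose else 0)
            · intro i hi
              have h := hchoice i hi
              simp only [dif_pos h]
              exact h.choose_spec.1
            · intro i hi j hj heq
              have hi' := hchoice i (Finset.mem_coe.1 hi)
              have hj' := hchoice j (Finset.mem_coe.1 hj)
              simp only [dif_pos hi', dif_pos hj'] at heq
              by_contra hne
              have h1 : hi'.choose ∈ U i := hi'.choose_spec.2
              have h2 : hi'.choose ∈ U j := by rw [heq]; exact hj'.choose_spec.2
              exact Set.disjoint_left.1 (hUdisj i j hne) h1 h2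
        have hBadlt : Bad.card < n - 1 := by
          have h2 : 2 ≤ n := by omega
          omega
        obtain ⟨i₀, hi₀Bad⟩ : ∃ i₀ : Fin (Fintype.card V - 1), i₀ ∉ Bad := by
          by_contra hc
          push_neg at hc
          have h1 : (Finset.univ : Finset (Fin (Fintype.card V - 1))) ⊆ Bad :=
            fun i _ => hc i
          have h2 := Finset.card_le_card h1
          rw [Finset.card_univ, Fintype.card_fin] at h2
          omega
        have hi₀ : ∀ x ∈ hit, (x : ℕ) ∉ U i₀ := by
          intro x hx hxU
          exact hi₀Bad (by
            rw [hBaddef, Finset.mem_filter]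
            exact ⟨Finset.mem_univ _, ⟨x, hx, hxU⟩⟩)
        set Mf := (M i₀).filter (fun e => ∀ v ∈ e, v ∉ Ap) with hMfdef
        have hM6 : 6 * k ≤ (M i₀).card + 6 := by
          have h1 := hMcard i₀
          have hr : (6 * k : ℝ) ≤ ((M i₀).card : ℝ) + 6 := by
            have : (k : ℝ) ≤ α * n + 1 := hkup
            calc (6 * k : ℝ) = 6 * (k : ℝ) := by push_cast; ring
            _ ≤ 6 * (α * n + 1) := by linarith
            _ = 6 * α * n + 6 := by ring
            _ ≤ ((M i₀).card : ℝ) + 6 := by linarith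
          exact_mod_cast hr
        have hMfcard : 5 * k ≤ Mf.card + 6 := by
          have h1 := Stmt6.matching_filter_card (hMmatch i₀) Ap
          rw [hApcard] at h1
          have hMfeq : Mf.card = ((M i₀).filter (fun e => ∀ v ∈ e, v ∉ Ap)).card := by
            rw [hMfdef]
          omega
        have hMfsub : Mf ⊆ SD := by
          intro e he
          rw [hMfdef, Finset.mem_filter] at he
          obtain ⟨heM, heAp⟩ := he
          have hcU : c e ∈ U i₀ := hMcol i₀ e heM
          rw [hSDdef, Finset.mem_filter, hℰdef, Finset.mem_filter]
          have hcC0 : c e ∉ C0 := fun hc =>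
            hi₀ _ (Finset.mem_union_left _ hc) hcU
          have hcD : c e ∉ D := fun hc =>
            hi₀ _ (Finset.mem_union_right _ hc) hcU
          exact ⟨⟨SimpleGraph.mem_edgeFinset.2 (hMsub i₀ (Finset.mem_coe.2 heM)),
            heAp, hcC0⟩, hcD⟩
        have hMfsubM : Mf ⊆ M i₀ := by
          rw [hMfdef]; exact Finset.filter_subset _ _
        have hforest := Stmt6.isForest_matching
          (Stmt6.isMatchingSet_subset (hMmatch i₀) hMfsubM)
        have hcompsMf : Stmt6.comps Mf + Mf.card = n := by
          rw [hndef]; exact hforest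
        have hcompsSD : Stmt6.comps SD ≤ Stmt6.comps Mf := Stmt6.comps_mono hMfsub
        have hMfn : Mf.card ≤ n := by omega
        omega
  -- ==================== apply Rado ====================
  obtain ⟨F, hFsub, hFcard, hFforest, hFrainbow⟩ := Stmt6.rado c (m - 1) ℰ hcond
  have hFav : ∀ e ∈ F, ∀ v ∈ e, v ∉ Ap := by
    intro e he v hv
    have h1 := hFsub he
    rw [hℰdef, Finset.mem_filter] at h1
    exact h1.2.1 v hv
  have hFcol : ∀ e ∈ F, c e ∉ C0 := by
    intro e he
    have h1 := hFsub he
    rw [hℰdef, Finset.mem_filter] at h1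
    exact h1.2.2
  have hFG : ∀ e ∈ F, e ∈ G.edgeSet := by
    intro e he
    have h1 := hFsub he
    rw [hℰdef, Finset.mem_filter] at h1
    exact SimpleGraph.mem_edgeFinset.1 h1.1
  have hcompsF : Stmt6.comps F = k + 1 := by
    have h1 : Stmt6.comps F + F.card = n := by rw [hndef]; exact hFforest
    omega
  -- all vertices outside A⁺ lie in one component of F
  have hiso : ∀ a ∈ Ap, ∀ e ∈ F, a ∉ e := fun a ha e he hv => hFav e he a hv ha
  have hinjAp : Set.InjOn (Stmt6.cmk F) ↑Ap := by
    intro a ha a' ha' haa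
    exact Stmt6.reach_isolated (fun e he => hiso a (Finset.mem_coe.1 ha) e he)
      (Stmt6.cmk_eq_iff.1 haa)
  have hdisj2 : ∀ a ∈ Ap, ∀ w : V, w ∉ Ap → Stmt6.cmk F a ≠ Stmt6.cmk F w := by
    intro a ha w hw hc
    have := Stmt6.reach_isolated (fun e he => hiso a ha e he) (Stmt6.cmk_eq_iff.1 hc)
    exact hw (this ▸ ha)
  have hsplitim : Finset.univ.image (Stmt6.cmk F) =
      Ap.image (Stmt6.cmk F) ∪ (Finset.univ \ Ap).image (Stmt6.cmk F) := by
    rw [← Finset.image_union]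
    congr 1
    ext w
    simp only [Finset.mem_union, Finset.mem_sdiff, Finset.mem_univ, true_and]
    tauto
  have hdisjim : Disjoint (Ap.image (Stmt6.cmk F))
      ((Finset.univ \ Ap).image (Stmt6.cmk F)) := by
    rw [Finset.disjoint_left]
    rintro x hx hx'
    obtain ⟨a, ha, rfl⟩ := Finset.mem_image.1 hx
    obtain ⟨w, hw, hww⟩ := Finset.mem_image.1 hx'
    rw [Finset.mem_sdiff] at hw
    exact hdisj2 a ha w hw.2 hww.symm
  have hcard1 : (Ap.image (Stmt6.cmk F)).card = k := by
    rw [Finset.card_image_of_injOn hinjAp, hApcard]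
  have hcardout : ((Finset.univ \ Ap).image (Stmt6.cmk F)).card = 1 := by
    have h1 := congrArg Finset.card hsplitim
    rw [Finset.card_union_of_disjoint hdisjim, hcard1] at h1
    have h2 : (Finset.univ.image (Stmt6.cmk F)).card = k + 1 := hcompsF
    omega
  have hreachout : ∀ u v : V, u ∉ Ap → v ∉ Ap → (Stmt6.Gr F).Reachable u v := by
    intro u v hu hv
    apply Stmt6.cmk_eq_iff.1
    have hmu : Stmt6.cmk F u ∈ (Finset.univ \ Ap).image (Stmt6.cmk F) :=
      Finset.mem_image_of_mem _ (Finset.mem_sdiff.2 ⟨Finset.mem_univ _, hu⟩)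
    have hmv : Stmt6.cmk F v ∈ (Finset.univ \ Ap).image (Stmt6.cmk F) :=
      Finset.mem_image_of_mem _ (Finset.mem_sdiff.2 ⟨Finset.mem_univ _, hv⟩)
    exact Finset.card_le_one.1 (le_of_eq hcardout) _ hmu _ hmv
  -- ==================== the spanning tree ====================
  set L : Finset (Sym2 V) := Ap.image (fun a => s(a, b a)) with hLdef
  have hLinj : Set.InjOn (fun a => s(a, b a)) ↑Ap := by
    intro x hx y hy hxy
    simp only at hxy
    rw [Sym2.eq_iff] at hxy
    rcases hxy with ⟨h1, -⟩ | ⟨h1, h2⟩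
    · exact h1
    · exfalso
      exact hb2 y (Finset.mem_coe.1 hy) (h1 ▸ Finset.mem_coe.1 hx)
  have hLcard : L.card = k := by
    rw [hLdef, Finset.card_image_of_injOn hLinj, hApcard]
  have hdisjFL : Disjoint F L := by
    rw [Finset.disjoint_right]
    intro e heL heF
    rw [hLdef] at heL
    obtain ⟨a, ha, rfl⟩ := Finset.mem_image.1 heL
    exact hFav _ heF a (Sym2.mem_mk_left _ _) ha
  set Ft := F ∪ L with hFtdef
  have hFtcard : Ft.card = n - 1 := by
    have h1 : Ft.card = (m - 1) + k := by
      rw [hFtdef, Finset.card_union_of_disjoint hdisjFL, hFcard, hLcard]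
    have h2 : (m - 1) + k = n - 1 := by omega
    rw [h1, h2]
  have hFsubFt : F ⊆ Ft := by rw [hFtdef]; exact Finset.subset_union_left
  have hLsubFt : L ⊆ Ft := by rw [hFtdef]; exact Finset.subset_union_right
  -- reachability in the final graph
  have hstep : ∀ a ∈ Ap, (Stmt6.Gr Ft).Reachable a (b a) := by
    intro a ha
    apply SimpleGraph.Adj.reachable
    rw [Stmt6.gr_adj]
    constructor
    · exact hLsubFt (by rw [hLdef]; exact Finset.mem_image_of_mem _ ha)
    · intro hc
      exact hb2 a ha (hc ▸ ha)
  have hout_ne : ∃ w : V, w ∉ Ap := by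
    by_contra hc
    push_neg at hc
    have h1 : (Finset.univ : Finset V) ⊆ Ap := fun w _ => hc w
    have h2 := Finset.card_le_card h1
    rw [Finset.card_univ, hApcard] at h2
    omega
  obtain ⟨w₀, hw₀⟩ := hout_ne
  have houtT : ∀ u v : V, u ∉ Ap → v ∉ Ap → (Stmt6.Gr Ft).Reachable u v :=
    fun u v hu hv => Stmt6.reach_mono hFsubFt (hreachout u v hu hv)
  have hto : ∀ u : V, (Stmt6.Gr Ft).Reachable u w₀ := by
    intro u
    by_cases hu : u ∈ Ap
    · exact (hstep u hu).trans (houtT (b u) w₀ (hb2 u hu) hw₀)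
    · exact houtT u w₀ hu hw₀
  have hreachT : ∀ u v : V, (Stmt6.Gr Ft).Reachable u v :=
    fun u v => (hto u).trans (hto v).symm
  have hVne : Nonempty V := by
    rw [← Fintype.card_pos_iff]
    omega
  have hconn : (Stmt6.Gr Ft).Connected := by
    rw [SimpleGraph.connected_iff]
    exact ⟨fun u v => hreachT u v, hVne⟩
  have hcompsFt : Stmt6.comps Ft = 1 := by
    have h1 : (Finset.univ.image (Stmt6.cmk Ft)).card ≤ 1 := by
      apply Finset.card_le_one.2
      intro a ha a' ha'
      obtain ⟨u, -, rfl⟩ := Finset.mem_image.1 ha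
      obtain ⟨v, -, rfl⟩ := Finset.mem_image.1 ha'
      exact Stmt6.cmk_eq_iff.2 (hreachT u v)
    have h2 : 0 < (Finset.univ.image (Stmt6.cmk Ft)).card :=
      Finset.card_pos.2 ⟨_, Finset.mem_image_of_mem _ (Finset.mem_univ w₀)⟩
    have h0 : Stmt6.comps Ft = (Finset.univ.image (Stmt6.cmk Ft)).card := rfl
    omega
  -- acyclicity
  have hacyc : (Stmt6.Gr Ft).IsAcyclic := by
    rw [SimpleGraph.isAcyclic_iff_forall_edge_isBridge]
    intro e he
    revert he
    induction e using Sym2.ind with | _ x y =>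
    intro he
    have hadj : (Stmt6.Gr Ft).Adj x y := by rwa [SimpleGraph.mem_edgeSet] at he
    have hm : s(x, y) ∈ Ft := (Stmt6.gr_adj.1 hadj).1
    rw [SimpleGraph.isBridge_iff]
    intro hr
    have hle : (Stmt6.Gr Ft \ SimpleGraph.fromEdgeSet {s(x, y)}) ≤
        Stmt6.Gr (Ft.erase s(x, y)) := by
      intro a a' hab
      rw [SimpleGraph.sdiff_adj] at hab
      obtain ⟨h1, h2⟩ := hab
      rw [Stmt6.gr_adj] at h1 ⊢
      refine ⟨Finset.mem_erase.2 ⟨?_, h1.1⟩, h1.2⟩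
      intro hc
      apply h2
      rw [SimpleGraph.fromEdgeSet_adj]
      exact ⟨by rw [hc]; exact Set.mem_singleton _, h1.2⟩
    have hr' := hr.mono hle
    have hinsx : insert s(x, y) (Ft.erase s(x, y)) = Ft := Finset.insert_erase hm
    have hc1 : Stmt6.comps Ft = Stmt6.comps (Ft.erase s(x, y)) := by
      conv_lhs => rw [← hinsx]
      exact Stmt6.comps_insert_reach hr'
    have hge := Stmt6.card_add_comps_ge (Ft.erase s(x, y))
    rw [Finset.card_erase_of_mem hm, ← hc1, hcompsFt, hFtcard] at hge
    omega
  -- edge set characterisation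
  have hnodiag : ∀ e ∈ Ft, ¬ e.IsDiag := by
    intro e he
    rw [hFtdef, Finset.mem_union] at he
    rcases he with he | he
    · exact Stmt6.forest_no_diag hFforest he
    · rw [hLdef] at he
      obtain ⟨a, ha, rfl⟩ := Finset.mem_image.1 he
      rw [Sym2.mk_isDiag_iff]
      intro hc
      exact hb2 a ha (hc ▸ ha)
  have hedgeSet : (Stmt6.Gr Ft).edgeSet = ↑Ft := by
    rw [Stmt6.Gr, SimpleGraph.edgeSet_fromEdgeSet]
    ext e
    constructor
    · intro he
      exact he.1
    · intro he
      exact ⟨he, hnodiag e (Finset.mem_coe.1 he)⟩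
  -- colour facts for L
  have hLC0 : ∀ e ∈ L, c e ∈ C0 := by
    intro e he
    rw [hLdef] at he
    obtain ⟨a, ha, rfl⟩ := Finset.mem_image.1 he
    rw [hC0def]
    exact Finset.mem_image_of_mem _ ha
  have hrainbow : IsRainbow c (Stmt6.Gr Ft).edgeSet := by
    rw [hedgeSet]
    intro e1 he1 e2 he2 hce
    have he1' := Finset.mem_coe.1 he1
    have he2' := Finset.mem_coe.1 he2
    rw [hFtdef, Finset.mem_union] at he1' he2'
    rcases he1' with h1 | h1 <;> rcases he2' with h2 | h2
    · exact hFrainbow (Finset.mem_coe.2 h1) (Finset.mem_coe.2 h2) hce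
    · exact absurd (hce ▸ hLC0 e2 h2) (hFcol e1 h1)
    · exact absurd (hce ▸ hLC0 e1 h1) (hFcol e2 h2)
    · rw [hLdef] at h1 h2
      obtain ⟨a1, ha1, rfl⟩ := Finset.mem_image.1 h1
      obtain ⟨a2, ha2, rfl⟩ := Finset.mem_image.1 h2
      have := hb4 (Finset.mem_coe.2 ha1) (Finset.mem_coe.2 ha2) hce
      rw [this]
  -- degrees
  have hdegApv : ∀ a ∈ Ap, (Stmt6.Gr Ft).degree a = 1 := by
    intro a ha
    have hset : (Stmt6.Gr Ft).neighborFinset a = {b a} := by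
      ext w
      rw [SimpleGraph.mem_neighborFinset, Stmt6.gr_adj, Finset.mem_singleton]
      constructor
      · rintro ⟨hm, hne⟩
        rw [hFtdef, Finset.mem_union] at hm
        rcases hm with hm | hm
        · exact absurd ha (hFav _ hm a (Sym2.mem_mk_left _ _))
        · rw [hLdef] at hm
          obtain ⟨a', ha', hae⟩ := Finset.mem_image.1 hm
          rw [Sym2.eq_iff] at hae
          rcases hae with ⟨h1, h2⟩ | ⟨h1, h2⟩
          · rw [← h2, h1]
          · exfalso
            exact hb2 a' ha' (h2 ▸ ha)
      · rintro rfl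
        refine ⟨hLsubFt (by rw [hLdef]; exact Finset.mem_image_of_mem _ ha), ?_⟩
        intro hc
        exact hb2 a ha (hc ▸ ha)
    rw [← SimpleGraph.card_neighborFinset_eq_degree, hset, Finset.card_singleton]
  have hdegout : ∀ v : V, v ∉ Ap → (Stmt6.Gr Ft).degree v ≤ m := by
    intro v hv
    have hsub : (Stmt6.Gr Ft).neighborFinset v ⊆
        ((Finset.univ \ Ap).erase v) ∪ (Ap.filter (fun a => b a = v)) := by
      intro w hw
      rw [SimpleGraph.mem_neighborFinset, Stmt6.gr_adj] at hw
      obtain ⟨hm, hne⟩ := hw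
      rw [hFtdef, Finset.mem_union] at hm
      rw [Finset.mem_union]
      rcases hm with hm | hm
      · left
        rw [Finset.mem_erase, Finset.mem_sdiff]
        exact ⟨fun hc => hne hc.symm,
          ⟨Finset.mem_univ _, hFav _ hm w (Sym2.mem_mk_right _ _)⟩⟩
      · right
        rw [hLdef] at hm
        obtain ⟨a, ha, hae⟩ := Finset.mem_image.1 hm
        rw [Sym2.eq_iff] at hae
        rcases hae with ⟨h1, h2⟩ | ⟨h1, h2⟩
        · exact absurd (h1 ▸ ha) hv
        · rw [Finset.mem_filter]
          exact ⟨h1 ▸ ha, by rw [← h1]; exact h2⟩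
    have hc1 : ((Finset.univ \ Ap).erase v).card = n - k - 1 := by
      rw [Finset.card_erase_of_mem (Finset.mem_sdiff.2 ⟨Finset.mem_univ _, hv⟩),
        Finset.card_sdiff_of_subset (Finset.subset_univ _), Finset.card_univ, hApcard]
    have hc2 : (Ap.filter (fun a => b a = v)).card ≤ 1 := by
      apply Finset.card_le_one.2
      intro a1 h1 a2 h2
      rw [Finset.mem_filter] at h1 h2
      exact hb3 (Finset.mem_coe.2 h1.1) (Finset.mem_coe.2 h2.1) (h1.2.trans h2.2.symm)
    have hle := Finset.card_le_card hsub
    have hcu := Finset.card_union_le ((Finset.univ \ Ap).erase v)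
      (Ap.filter (fun a => b a = v))
    rw [← SimpleGraph.card_neighborFinset_eq_degree]
    omega
  -- ==================== conclusion ====================
  refine ⟨Stmt6.Gr Ft, ?_, ⟨hconn, hacyc⟩, hrainbow, ?_, ?_⟩
  · intro u v huv
    rw [Stmt6.gr_adj] at huv
    obtain ⟨hm, hne⟩ := huv
    rw [hFtdef, Finset.mem_union] at hm
    rcases hm with hm | hm
    · exact (SimpleGraph.mem_edgeSet G).1 (hFG _ hm)
    · rw [hLdef] at hm
      obtain ⟨a, ha, hae⟩ := Finset.mem_image.1 hm
      rw [Sym2.eq_iff] at hae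
      rcases hae with ⟨h1, h2⟩ | ⟨h1, h2⟩
      · rw [← h1, ← h2]
        exact hb1 a ha
      · rw [← h1, ← h2]
        exact (hb1 a ha).symm
  · intro v
    by_cases hv : v ∈ Ap
    · rw [hdegApv v hv]
      have h1 : (1 : ℝ) ≤ (1 - α) * n := by nlinarith [hn225, hα0, hα]
      calc ((1 : ℕ) : ℝ) = 1 := by norm_num
      _ ≤ (1 - α) * n := h1
    · have h1 := hdegout v hv
      have h2 : ((Stmt6.Gr Ft).degree v : ℝ) ≤ (m : ℝ) := by exact_mod_cast h1
      have h3 : (m : ℝ) = (n : ℝ) - k := by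
        rw [hmdef, Nat.cast_sub hkn]
      calc ((Stmt6.Gr Ft).degree v : ℝ) ≤ (m : ℝ) := h2
      _ = (n : ℝ) - k := h3
      _ ≤ (n : ℝ) - α * n := by linarith [hklow]
      _ = (1 - α) * n := by ring
  · intro v hvA
    exact hdegApv v (hAsub hvA)
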